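/- Let m be an integer, let q₀ be a squarefree positive integer, and let R₀ be a finite set of integers. If q is a positive integer such that there exists a prime p with p ∣ q₀ and p² ∣ q, then f(q) = 0. -/

import Mathlib

/-- `e(x) = exp(2πix)`. -/
noncomputable def e (x : ℝ) : ℂ := Complex.exp (2 * (Real.pi : ℂ) * Complex.I * (x : ℂ))

/-- `(μ/φ)(n) = μ(n)/φ(n)`. -/
noncomputable def muphi (n : ℕ) : ℂ :=
  ((ArithmeticFunction.moebius n : ℤ) : ℂ) / (Nat.totient n : ℂ)

/-- `f(q) = q₀⁻³ ∑_{1 ≤ a ≤ q, (a,q)=1} e(-am/q)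
  (∑_{ℓ=0}^{q₀-1} (μ/φ)(qq₀/gcd(qq₀, aq₀+ℓq)) ∑_{r ∈ R₀} e(-ℓr/q₀))³`. -/
noncomputable def f (m : ℤ) (q₀ : ℕ) (R₀ : Finset ℤ) (q : ℕ) : ℂ :=
  ((q₀ : ℂ) ^ 3)⁻¹ * ∑ a ∈ (Finset.Icc 1 q).filter (fun a => Nat.gcd a q = 1),
    e (-((a : ℝ) * (m : ℝ) / (q : ℝ))) *
      (∑ ℓ ∈ Finset.range q₀,
        muphi ((q * q₀) / Nat.gcd (q * q₀) (a * q₀ + ℓ * q)) *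
          ∑ r ∈ R₀, e (-((ℓ : ℝ) * (r : ℝ) / (q₀ : ℝ)))) ^ 3

/-- If some prime `p` divides `q₀` and `p²` divides `q`, then `f(q) = 0`. -/
lemma muphi_eq_zero (p n : ℕ) (hp : p.Prime) (h : p ^ 2 ∣ n) : muphi n = 0 := by
  unfold muphi
  rw [ArithmeticFunction.moebius_eq_zero_of_not_squarefree]
  · simp
  · intro hs
    exact hp.one_lt.ne' (Nat.isUnit_iff.mp (hs p (by simpa [pow_two] using h)))

theorem f_eq_zero_of_sq_dvd (m : ℤ) (q₀ : ℕ) (hq₀ : 0 < q₀) (hsf : Squarefree q₀)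
    (R₀ : Finset ℤ) (q : ℕ) (hq : 0 < q)
    (p : ℕ) (hp : p.Prime) (hpq₀ : p ∣ q₀) (hpq : p ^ 2 ∣ q) :
    f m q₀ R₀ q = 0 := by
  unfold f
  rw [Finset.sum_eq_zero, mul_zero]
  intro a ha
  rw [Finset.mem_filter, Finset.mem_Icc] at ha
  obtain ⟨⟨ha1, _⟩, hgcd⟩ := ha
  rw [Finset.sum_eq_zero, zero_pow (by norm_num), mul_zero]
  intro ℓ _
  rw [muphi_eq_zero p _ hp, zero_mul]
  -- show `p ^ 2 ∣ (q * q₀) / gcd (q * q₀) (a * q₀ + ℓ * q)`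
  have hqq₀ : q * q₀ ≠ 0 := by positivity
  have hN : a * q₀ + ℓ * q ≠ 0 := by positivity
  set g := Nat.gcd (q * q₀) (a * q₀ + ℓ * q) with hg
  have hgdvd : g ∣ q * q₀ := Nat.gcd_dvd_left _ _
  have hpa : ¬ p ∣ a := fun h => hp.one_lt.ne'
    (Nat.eq_one_of_dvd_one (hgcd ▸ Nat.dvd_gcd h (dvd_trans (dvd_pow_self p two_ne_zero) hpq)))
  have hvq : 2 ≤ (q).factorization p :=
    (Nat.Prime.pow_dvd_iff_le_factorization hp hq.ne').mp hpq
  have hvq₀ : (q₀).factorization p = 1 := by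
    have h1 : 1 ≤ (q₀).factorization p :=
      (Nat.Prime.pow_dvd_iff_le_factorization hp hq₀.ne').mp (by simpa using hpq₀)
    have h2 : (q₀).factorization p ≤ 1 := hsf.natFactorization_le_one p
    omega
  have hvqq₀ : 3 ≤ (q * q₀).factorization p := by
    rw [Nat.factorization_mul hq.ne' hq₀.ne']
    simp only [Finsupp.add_apply]
    omega
  have hvN : (a * q₀ + ℓ * q).factorization p = 1 := by
    have hle : (a * q₀ + ℓ * q).factorization p ≤ 1 := by
      by_contra hcon
      push_neg at hcon
      have h2 : p ^ 2 ∣ a * q₀ + ℓ * q :=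
        (Nat.Prime.pow_dvd_iff_le_factorization hp hN).mpr hcon
      have h3 : p ^ 2 ∣ ℓ * q := hpq.mul_left ℓ
      rw [add_comm] at h2
      have h4 : p ^ 2 ∣ a * q₀ := (Nat.dvd_add_right h3).mp h2
      have h5 : 2 ≤ (a * q₀).factorization p :=
        (Nat.Prime.pow_dvd_iff_le_factorization hp (by positivity)).mp h4
      rw [Nat.factorization_mul (by omega) hq₀.ne'] at h5
      simp only [Finsupp.add_apply] at h5
      rw [Nat.factorization_eq_zero_of_not_dvd hpa] at h5
      omega
    have hge : 1 ≤ (a * q₀ + ℓ * q).factorization p := by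
      refine (Nat.Prime.pow_dvd_iff_le_factorization hp hN).mp ?_
      simpa using dvd_add ((hpq₀.mul_left a)) ((dvd_trans (dvd_pow_self p two_ne_zero) hpq).mul_left ℓ)
    omega
  have hvg : (g).factorization p = 1 := by
    rw [hg, Nat.factorization_gcd hqq₀ hN]
    simp only [Finsupp.inf_apply, hvN]
    omega
  refine (Nat.Prime.pow_dvd_iff_le_factorization hp ?_).mpr ?_
  · exact Nat.div_ne_zero_iff_of_dvd hgdvd |>.mpr ⟨hqq₀, Nat.gcd_ne_zero_left hqq₀⟩
  · rw [Nat.factorization_div hgdvd]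
    simp only [Finsupp.tsub_apply, hvg]
    omega
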